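/- For integers n ≥ 1 and k ≥ 0, define the extended Stirling number of the first kind σ(n,k) := ((−1)^{k+1}/n!) · ∑_{m=1}^{n} C(n,m) · (−1)^m · m^{−k} ∈ ℚ (these are the values s(−n,k) of the Stirling numbers of the first kind extended to negative first argument). Then for all integers n ≥ 2 and k ≥ 1, σ(n−1, k) = σ(n, k−1) + n · σ(n, k); equivalently, the extended Stirling numbers satisfy the recursion s(N+1, k) = s(N, k−1) − N·s(N, k) for negative integers N. -/

import Mathlib

/-- The extended Stirling numbers of the first kind with negative first argument:
`σ(n,k) = s(-n,k) = ((-1)^{k+1}/n!) ∑_{m=1}^n C(n,m) (-1)^m m^{-k}`. -/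
def sigmaS (n k : ℕ) : ℚ :=
  ((-1) ^ (k + 1) / (n.factorial : ℚ)) *
    ∑ m ∈ Finset.Icc 1 n, (n.choose m : ℚ) * (-1) ^ m * ((m : ℚ) ^ k)⁻¹

/-- The recursion `s(N+1,k) = s(N,k-1) - N·s(N,k)` for negative `N`: in terms of
`σ(n,k) = s(-n,k)`, this reads `σ(n-1,k) = σ(n,k-1) + n·σ(n,k)` for `n ≥ 2`, `k ≥ 1`. -/
theorem stmt17 (n k : ℕ) (hn : 2 ≤ n) (hk : 1 ≤ k) :
    sigmaS (n - 1) k = sigmaS n (k - 1) + (n : ℚ) * sigmaS n k := by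
  obtain ⟨N, hN, rfl⟩ : ∃ N, 1 ≤ N ∧ n = N + 1 := ⟨n - 1, by omega, by omega⟩
  obtain ⟨K, rfl⟩ : ∃ K, k = K + 1 := ⟨k - 1, by omega⟩
  simp only [sigmaS, Nat.add_sub_cancel]
  rw [Finset.sum_Icc_succ_top (by omega : 1 ≤ N + 1)]
  rw [Finset.sum_Icc_succ_top (by omega : 1 ≤ N + 1)]
  have hsum : ((N : ℚ) + 1) * ∑ m ∈ Finset.Icc 1 N, (N.choose m : ℚ) * (-1) ^ m * ((m : ℚ) ^ (K+1))⁻¹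
      = ((N : ℚ) + 1) * (∑ m ∈ Finset.Icc 1 N, ((N+1).choose m : ℚ) * (-1) ^ m * ((m : ℚ) ^ (K+1))⁻¹)
        - ∑ m ∈ Finset.Icc 1 N, ((N+1).choose m : ℚ) * (-1) ^ m * ((m : ℚ) ^ K)⁻¹ := by
    rw [Finset.mul_sum, Finset.mul_sum, ← Finset.sum_sub_distrib]
    refine Finset.sum_congr rfl fun m hm => ?_
    simp only [Finset.mem_Icc] at hm
    have hm0 : (m : ℚ) ≠ 0 := Nat.cast_ne_zero.mpr (by omega)
    have hinv : ((m : ℚ) ^ K)⁻¹ = (m : ℚ) * ((m : ℚ) ^ (K+1))⁻¹ := by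
      rw [pow_succ, mul_inv]; field_simp
    have hc : ((N : ℚ) + 1) * (N.choose m : ℚ) = ((N+1).choose m : ℚ) * ((N : ℚ) + 1 - (m : ℚ)) := by
      have h := Nat.choose_mul_succ_eq N m
      have h2 : ((N.choose m * (N+1) : ℕ) : ℚ) = (((N+1).choose m * (N+1-m) : ℕ) : ℚ) := by
        rw [h]
      push_cast [Nat.cast_sub (by omega : m ≤ N+1)] at h2
      linarith
    rw [hinv]
    linear_combination ((-1 : ℚ)^m * ((m : ℚ) ^ (K+1))⁻¹) * hc
  have hN0 : ((N : ℚ) + 1) ≠ 0 := by positivity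
  have hf0 : (N.factorial : ℚ) ≠ 0 := Nat.cast_ne_zero.mpr N.factorial_ne_zero
  have hinvN : (((N:ℚ) + 1) ^ K)⁻¹ = ((N:ℚ)+1) * (((N:ℚ)+1) ^ (K+1))⁻¹ := by
    rw [pow_succ, mul_inv]; field_simp
  have hcan : ((N : ℚ) + 1) * ((N : ℚ) + 1)⁻¹ = 1 := mul_inv_cancel₀ hN0
  rw [Nat.factorial_succ, Nat.choose_self]
  push_cast [hinvN]
  simp only [div_eq_mul_inv, mul_inv]
  linear_combination ((-1 : ℚ)^(K+1+1) * ((N.factorial : ℚ))⁻¹ * ((N : ℚ)+1)⁻¹) * hsum +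
    (-(-1 : ℚ)^(K+1+1) * ((N.factorial : ℚ))⁻¹ *
      ∑ m ∈ Finset.Icc 1 N, (N.choose m : ℚ) * (-1) ^ m * ((m : ℚ) ^ (K+1))⁻¹) * hcan
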